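/- Let ψ : ℝ^d → ℝ^d be defined by ψ(x) = x(1+|x|^δ)^{-1} with δ ≥ 2. Then for all x ∈ ℝ^d and all unit vectors u ∈ ℝ^d, the second derivative satisfies |ψ''(x)(u,u)| ≤ min(3δ² + δ, (3δ² + δ)|x|^{δ-1}). -/

import Mathlib

open ContinuousLinearMap Asymptotics Topology
open scoped RealInnerProductSpace

section helpers

variable {E : Type*} [NormedAddCommGroup E] [InnerProductSpace ℝ E]

/-- derivative of `‖·‖ ^ p` at a nonzero point, any real exponent. -/
theorem hasFDerivAt_norm_rpow_ne {x : E} (hx : x ≠ 0) (p : ℝ) :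
    HasFDerivAt (fun x : E ↦ ‖x‖ ^ p) ((p * ‖x‖ ^ (p - 2)) • innerSL ℝ x) x := by
  apply HasStrictFDerivAt.hasFDerivAt
  convert (hasStrictFDerivAt_norm_sq x).rpow_const (p := p / 2) (by simp [hx]) using 0
  simp_rw [← Real.rpow_natCast_mul (norm_nonneg _), ← Nat.cast_smul_eq_nsmul ℝ, smul_smul]
  ring_nf

noncomputable def ggg (δ : ℝ) (y : E) : ℝ := (1 + ‖y‖ ^ δ)⁻¹

noncomputable def ccc (δ : ℝ) (y : E) : ℝ := -δ * ‖y‖ ^ (δ - 2) * (ggg δ y * ggg δ y)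

variable (E) in
noncomputable def Phi : E →L[ℝ] E →L[ℝ] E →L[ℝ] E := (smulRightL ℝ E E).comp (innerSL ℝ)

lemma Phi_apply (a b c : E) : Phi E a b c = ⟪a, c⟫ • b := by
  simp only [Phi, ContinuousLinearMap.coe_comp', Function.comp_apply]
  rfl

lemma Phi_norm (a b : E) : ‖Phi E a b‖ = ‖a‖ * ‖b‖ := by
  simp only [Phi, ContinuousLinearMap.coe_comp', Function.comp_apply,
    ContinuousLinearMap.smulRightL_apply_apply, norm_smulRight_apply, innerSL_apply_norm]

noncomputable def FFF (δ : ℝ) (y : E) : E →L[ℝ] E :=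
  ggg δ y • ContinuousLinearMap.id ℝ E + ccc δ y • Phi E y y

lemma one_add_pos (δ : ℝ) (y : E) : (0:ℝ) < 1 + ‖y‖ ^ δ := by positivity

lemma ggg_pos (δ : ℝ) (y : E) : 0 < ggg δ y := inv_pos.mpr (one_add_pos δ y)

lemma ggg_le_one (δ : ℝ) (y : E) : ggg δ y ≤ 1 := by
  rw [ggg]
  have h1 : (1:ℝ) ≤ 1 + ‖y‖ ^ δ := le_add_of_nonneg_right (Real.rpow_nonneg (norm_nonneg y) δ)
  simpa using inv_anti₀ one_pos h1

lemma ggg_mul_le_one (δ : ℝ) (y : E) : ‖y‖ ^ δ * ggg δ y ≤ 1 := by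
  rw [ggg]
  have h := one_add_pos δ y
  have h2 : ‖y‖ ^ δ * (1 + ‖y‖ ^ δ)⁻¹ ≤ (1 + ‖y‖ ^ δ) * (1 + ‖y‖ ^ δ)⁻¹ :=
    mul_le_mul_of_nonneg_right (by linarith) (inv_nonneg.mpr h.le)
  rwa [mul_inv_cancel₀ h.ne'] at h2

lemma abs_ccc_le {δ : ℝ} (hδ : 2 ≤ δ) (y : E) :
    |ccc δ y| ≤ δ * ‖y‖ ^ (δ - 2) * (ggg δ y * ggg δ y) := by
  rw [ccc, abs_mul, abs_mul, abs_neg, abs_of_nonneg (by linarith : (0:ℝ) ≤ δ),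
    abs_of_nonneg (Real.rpow_nonneg (norm_nonneg y) _),
    abs_of_nonneg (mul_nonneg (ggg_pos δ y).le (ggg_pos δ y).le)]

lemma hasFDerivAt_ggg {δ : ℝ} (hδ : 2 ≤ δ) (x : E) :
    HasFDerivAt (ggg δ) (ccc δ x • innerSL ℝ x) x := by
  have hpos := one_add_pos δ x
  have h1 : HasFDerivAt (fun y : E ↦ 1 + ‖y‖ ^ δ) ((δ * ‖x‖ ^ (δ - 2)) • innerSL ℝ x) x :=
    (hasFDerivAt_norm_rpow x (by linarith)).const_add 1
  have h2 : HasDerivAt (fun t : ℝ ↦ t⁻¹) (-((1 + ‖x‖ ^ δ) ^ 2)⁻¹) (1 + ‖x‖ ^ δ) :=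
    hasDerivAt_inv hpos.ne'
  have h3 := h2.comp_hasFDerivAt x h1
  have hsc : ∀ t s : ℝ, 0 < 1 + s →
      -((1 + s) ^ 2)⁻¹ * (δ * t) = -δ * t * ((1 + s)⁻¹ * (1 + s)⁻¹) := by
    intro t s hs
    rw [sq, mul_inv]
    ring
  have heq : (-((1 + ‖x‖ ^ δ) ^ 2)⁻¹) • ((δ * ‖x‖ ^ (δ - 2)) • innerSL ℝ x)
      = ccc δ x • innerSL ℝ x := by
    rw [smul_smul, ccc, ggg]
    rw [hsc _ _ (by positivity)]
  rw [heq] at h3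
  exact h3

lemma hasFDerivAt_psi {δ : ℝ} (hδ : 2 ≤ δ) (x : E) :
    HasFDerivAt (fun y : E ↦ ggg δ y • y) (FFF δ x) x := by
  have h := (hasFDerivAt_ggg hδ x).smul (hasFDerivAt_id x)
  simp only [id_eq] at h
  have heq : ggg δ x • ContinuousLinearMap.id ℝ E
        + (ccc δ x • innerSL ℝ x).smulRight x = FFF δ x := by
    rw [FFF]
    congr 1
    ext u
    simp [Phi_apply, smul_smul]
  rwa [heq] at h

lemma FFF_zero {δ : ℝ} (hδ : 2 ≤ δ) : FFF δ (0 : E) = ContinuousLinearMap.id ℝ E := by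
  have hδ0 : δ ≠ 0 := by linarith
  simp [FFF, ggg, Real.zero_rpow hδ0]

lemma littleO_norm_rpow {δ : ℝ} (hδ : 1 < δ) :
    (fun h : E ↦ ‖h‖ ^ δ) =o[𝓝 0] fun h : E ↦ h := by
  have h1 : (0:ℝ) < δ - 1 := by linarith
  calc (fun h : E ↦ ‖h‖ ^ δ)
      = fun h : E ↦ ‖h‖ * ‖h‖ ^ (δ - 1) := by
        funext h
        conv_lhs => rw [show δ = 1 + (δ - 1) by ring]
        rw [Real.rpow_one_add' (norm_nonneg h) (by linarith)]
    _ =o[𝓝 0] fun h : E ↦ ‖h‖ * 1 := by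
        refine (isBigO_refl (fun h : E ↦ ‖h‖) _).mul_isLittleO
          ((isLittleO_const_iff (by norm_num)).mpr ?_)
        convert (continuousAt_id (x := (0:E))).norm.rpow_const (.inr h1.le) |>.tendsto using 2
        all_goals simp [h1.ne']
    _ =O[𝓝 0] fun h : E ↦ h := by
        simp_rw [mul_one]
        rw [isBigO_norm_left]
        exact isBigO_refl _ _

lemma hasFDerivAt_FFF_zero {δ : ℝ} (hδ : 2 ≤ δ) :
    HasFDerivAt (FFF δ) (0 : E →L[ℝ] E →L[ℝ] E) (0 : E) := by
  rw [hasFDerivAt_iff_isLittleO_nhds_zero]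
  simp only [zero_add, FFF_zero hδ, ContinuousLinearMap.zero_apply, sub_zero]
  have hbound : ∀ h : E, ‖FFF δ h - ContinuousLinearMap.id ℝ E‖ ≤ (1 + δ) * ‖h‖ ^ δ := by
    intro h
    have hsub : FFF δ h - ContinuousLinearMap.id ℝ E
        = (ggg δ h - 1) • ContinuousLinearMap.id ℝ E + ccc δ h • Phi E h h := by
      rw [FFF]; module
    have hg1 : |ggg δ h - 1| ≤ ‖h‖ ^ δ := by
      have hpos := one_add_pos δ h
      have he : ggg δ h - 1 = -(‖h‖ ^ δ * ggg δ h) := by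
        rw [ggg]; field_simp; ring
      rw [he, abs_neg,
        abs_of_nonneg (mul_nonneg (Real.rpow_nonneg (norm_nonneg h) δ) (ggg_pos δ h).le)]
      calc ‖h‖ ^ δ * ggg δ h ≤ ‖h‖ ^ δ * 1 :=
            mul_le_mul_of_nonneg_left (ggg_le_one δ h) (Real.rpow_nonneg (norm_nonneg h) δ)
        _ = ‖h‖ ^ δ := mul_one _
    have hc1 : |ccc δ h| ≤ δ * ‖h‖ ^ (δ - 2) := by
      refine (abs_ccc_le hδ h).trans ?_
      have : ggg δ h * ggg δ h ≤ 1 := by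
        have := ggg_le_one δ h
        have := (ggg_pos δ h).le
        nlinarith
      calc δ * ‖h‖ ^ (δ - 2) * (ggg δ h * ggg δ h) ≤ δ * ‖h‖ ^ (δ - 2) * 1 :=
            mul_le_mul_of_nonneg_left this (by positivity)
        _ = δ * ‖h‖ ^ (δ - 2) := mul_one _
    have hmul : ‖h‖ ^ (δ - 2) * (‖h‖ * ‖h‖) = ‖h‖ ^ δ := by
      have h2 : ‖h‖ ^ ((2:ℕ):ℝ) = ‖h‖ * ‖h‖ := by
        rw [Real.rpow_natCast]; ring
      rw [← h2, ← Real.rpow_add' (norm_nonneg h) (by push_cast; linarith)]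
      norm_num
    calc ‖FFF δ h - ContinuousLinearMap.id ℝ E‖
        ≤ ‖(ggg δ h - 1) • ContinuousLinearMap.id ℝ E‖ + ‖ccc δ h • Phi E h h‖ := by
          rw [hsub]; exact norm_add_le _ _
      _ ≤ |ggg δ h - 1| * 1 + |ccc δ h| * (‖h‖ * ‖h‖) := by
          refine add_le_add ?_ ?_
          · refine (ContinuousLinearMap.opNorm_smul_le _ _).trans ?_
            rw [Real.norm_eq_abs]
            exact mul_le_mul_of_nonneg_left norm_id_le (abs_nonneg _)
          · refine (ContinuousLinearMap.opNorm_smul_le _ _).trans (le_of_eq ?_)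
            rw [Real.norm_eq_abs, Phi_norm]
      _ ≤ ‖h‖ ^ δ * 1 + (δ * ‖h‖ ^ (δ - 2)) * (‖h‖ * ‖h‖) := by
          refine add_le_add (mul_le_mul_of_nonneg_right hg1 zero_le_one)
            (mul_le_mul_of_nonneg_right hc1 (by positivity))
      _ = (1 + δ) * ‖h‖ ^ δ := by
          rw [mul_one, mul_assoc, hmul]; ring
  refine IsBigO.trans_isLittleO ?_ (littleO_norm_rpow (by linarith))
  refine IsBigO.of_bound (1 + δ) ?_
  filter_upwards with h
  rw [Real.norm_eq_abs, abs_of_nonneg (Real.rpow_nonneg (norm_nonneg h) δ)]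
  exact hbound h

set_option maxHeartbeats 1000000 in
lemma key_bound {δ : ℝ} (hδ : 2 ≤ δ) {x u : E} (hx : x ≠ 0) (hu : ‖u‖ = 1) :
    ‖fderiv ℝ (FFF δ) x u u‖
      ≤ (3 * δ ^ 2 + δ) * (‖x‖ ^ (δ - 1) * (ggg δ x * ggg δ x)) := by
  have hr : (0:ℝ) < ‖x‖ := norm_pos_iff.mpr hx
  set r : ℝ := ‖x‖ with hrdef
  set G : ℝ := ggg δ x with hGdef
  have hG0 : 0 < G := ggg_pos δ x
  have hG1 : G ≤ 1 := ggg_le_one δ x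
  have hGr : r ^ δ * G ≤ 1 := ggg_mul_le_one δ x
  -- derivatives of the pieces
  have hn : HasFDerivAt (fun y : E ↦ ‖y‖ ^ (δ - 2))
      (((δ - 2) * ‖x‖ ^ (δ - 2 - 2)) • innerSL ℝ x) x := hasFDerivAt_norm_rpow_ne hx (δ - 2)
  have hA : HasFDerivAt (fun y : E ↦ -δ * ‖y‖ ^ (δ - 2))
      ((-δ) • (((δ - 2) * ‖x‖ ^ (δ - 2 - 2)) • innerSL ℝ x)) x := hn.const_mul (-δ)
  have hg : HasFDerivAt (ggg δ) (ccc δ x • innerSL ℝ x) x := hasFDerivAt_ggg hδ x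
  have hg2 : HasFDerivAt (fun y : E ↦ ggg δ y * ggg δ y)
      (ggg δ x • (ccc δ x • innerSL ℝ x) + ggg δ x • (ccc δ x • innerSL ℝ x)) x := hg.mul hg
  have hc : HasFDerivAt (ccc δ)
      ((-δ * ‖x‖ ^ (δ - 2)) • (ggg δ x • (ccc δ x • innerSL ℝ x)
          + ggg δ x • (ccc δ x • innerSL ℝ x))
        + (ggg δ x * ggg δ x) • ((-δ) • (((δ - 2) * ‖x‖ ^ (δ - 2 - 2)) • innerSL ℝ x))) x :=
    hA.mul hg2
  have hQ : HasFDerivAt (fun y : E ↦ Phi E y y)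
      ((Phi E x).comp (ContinuousLinearMap.id ℝ E) + (Phi E).flip x) x := by
    have := (Phi E).hasFDerivAt (x := x) |>.clm_apply (hasFDerivAt_id x)
    simpa only [id_eq] using this
  have hT : HasFDerivAt (fun y : E ↦ ccc δ y • Phi E y y)
      (ccc δ x • ((Phi E x).comp (ContinuousLinearMap.id ℝ E) + (Phi E).flip x)
        + ((-δ * ‖x‖ ^ (δ - 2)) • (ggg δ x • (ccc δ x • innerSL ℝ x)
              + ggg δ x • (ccc δ x • innerSL ℝ x))
            + (ggg δ x * ggg δ x) •
              ((-δ) • (((δ - 2) * ‖x‖ ^ (δ - 2 - 2)) • innerSL ℝ x))).smulRight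
            (Phi E x x)) x := hc.smul hQ
  have hGd : HasFDerivAt (fun y : E ↦ ggg δ y • ContinuousLinearMap.id ℝ E)
      ((ccc δ x • innerSL ℝ x).smulRight (ContinuousLinearMap.id ℝ E)) x :=
    hg.smul_const (ContinuousLinearMap.id ℝ E)
  have hFd : HasFDerivAt (FFF δ) _ x := hGd.add hT
  -- inner product facts
  have hip : |⟪x, u⟫| ≤ r := by
    have := abs_real_inner_le_norm x u
    rwa [hu, mul_one] at this
  have huu : ⟪u, u⟫ = (1:ℝ) := by
    rw [real_inner_self_eq_norm_mul_norm, hu]; norm_num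
  have hCC : |ccc δ x| ≤ δ * r ^ (δ - 2) * (G * G) := abs_ccc_le hδ x
  have hδ0 : (0:ℝ) ≤ δ := by linarith
  have ht2 : (0:ℝ) ≤ r ^ (δ - 2) := Real.rpow_nonneg hr.le _
  have ht4 : (0:ℝ) ≤ r ^ (δ - 2 - 2) := Real.rpow_nonneg hr.le _
  -- bounds for the three pieces
  have b1 : ‖((ccc δ x • innerSL ℝ x).smulRight (ContinuousLinearMap.id ℝ E)) u u‖
      ≤ δ * r ^ (δ - 2) * (G * G) * r := by
    have e1 : ((ccc δ x • innerSL ℝ x).smulRight (ContinuousLinearMap.id ℝ E)) u u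
        = (ccc δ x * ⟪x, u⟫) • u := by
      simp [ContinuousLinearMap.smulRight_apply, smul_eq_mul]
    rw [e1, norm_smul, Real.norm_eq_abs, hu, mul_one, abs_mul]
    exact mul_le_mul hCC hip (abs_nonneg _) (by positivity)
  have b2 : ‖(ccc δ x • ((Phi E x).comp (ContinuousLinearMap.id ℝ E) + (Phi E).flip x)) u u‖
      ≤ δ * r ^ (δ - 2) * (G * G) * (r + r) := by
    have e2 : (ccc δ x • ((Phi E x).comp (ContinuousLinearMap.id ℝ E) + (Phi E).flip x)) u u
        = ccc δ x • (⟪x, u⟫ • u + ⟪u, u⟫ • x) := by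
      simp [Phi_apply]
    rw [e2, norm_smul, Real.norm_eq_abs]
    have hv : ‖⟪x, u⟫ • u + ⟪u, u⟫ • x‖ ≤ r + r := by
      refine (norm_add_le _ _).trans ?_
      rw [norm_smul, norm_smul, hu, mul_one, huu, Real.norm_eq_abs, Real.norm_eq_abs]
      rw [abs_one, one_mul]
      exact add_le_add hip le_rfl
    exact mul_le_mul hCC hv (norm_nonneg _) (by positivity)
  have b3 : ‖(((-δ * ‖x‖ ^ (δ - 2)) • (ggg δ x • (ccc δ x • innerSL ℝ x)
              + ggg δ x • (ccc δ x • innerSL ℝ x))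
            + (ggg δ x * ggg δ x) •
              ((-δ) • (((δ - 2) * ‖x‖ ^ (δ - 2 - 2)) • innerSL ℝ x))).smulRight
            (Phi E x x)) u u‖
      ≤ (δ * r ^ (δ - 2) * (2 * (G * ((δ * r ^ (δ - 2) * (G * G)) * r)))
          + G * G * (δ * ((δ - 2) * (r ^ (δ - 2 - 2) * r)))) * (r * r) := by
    have e3 : (((-δ * ‖x‖ ^ (δ - 2)) • (ggg δ x • (ccc δ x • innerSL ℝ x)
              + ggg δ x • (ccc δ x • innerSL ℝ x))
            + (ggg δ x * ggg δ x) •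
              ((-δ) • (((δ - 2) * ‖x‖ ^ (δ - 2 - 2)) • innerSL ℝ x))).smulRight
            (Phi E x x)) u u
        = ((-δ * ‖x‖ ^ (δ - 2)) * (ggg δ x * (ccc δ x * ⟪x, u⟫)
              + ggg δ x * (ccc δ x * ⟪x, u⟫))
            + (ggg δ x * ggg δ x) * ((-δ) * ((δ - 2) * ‖x‖ ^ (δ - 2 - 2) * ⟪x, u⟫)))
            • (⟪x, u⟫ • x) := by
      simp [Phi_apply, mul_assoc]
      congr 1
      ring
    rw [e3, norm_smul, norm_smul, Real.norm_eq_abs, Real.norm_eq_abs]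
    have hκ : |(-δ * ‖x‖ ^ (δ - 2)) * (ggg δ x * (ccc δ x * ⟪x, u⟫)
              + ggg δ x * (ccc δ x * ⟪x, u⟫))
            + (ggg δ x * ggg δ x) * ((-δ) * ((δ - 2) * ‖x‖ ^ (δ - 2 - 2) * ⟪x, u⟫))|
        ≤ δ * r ^ (δ - 2) * (2 * (G * ((δ * r ^ (δ - 2) * (G * G)) * r)))
          + G * G * (δ * ((δ - 2) * (r ^ (δ - 2 - 2) * r))) := by
      refine (abs_add_le _ _).trans ?_
      have ha1 : |(-δ * ‖x‖ ^ (δ - 2)) * (ggg δ x * (ccc δ x * ⟪x, u⟫)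
            + ggg δ x * (ccc δ x * ⟪x, u⟫))|
          = δ * r ^ (δ - 2) * (2 * (G * (|ccc δ x| * |⟪x, u⟫|))) := by
        rw [show ggg δ x * (ccc δ x * ⟪x, u⟫) + ggg δ x * (ccc δ x * ⟪x, u⟫)
            = 2 * (ggg δ x * (ccc δ x * ⟪x, u⟫)) by ring]
        simp only [← hrdef, ← hGdef, abs_mul, abs_neg, abs_two, abs_of_nonneg hδ0, abs_of_nonneg ht2,
          abs_of_nonneg hG0.le]
      have ha2 : |(ggg δ x * ggg δ x) * ((-δ) * ((δ - 2) * ‖x‖ ^ (δ - 2 - 2) * ⟪x, u⟫))|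
          = G * G * (δ * ((δ - 2) * (r ^ (δ - 2 - 2) * |⟪x, u⟫|))) := by
        simp only [← hrdef, ← hGdef, abs_mul, abs_neg, abs_of_nonneg hδ0, abs_of_nonneg ht4,
          abs_of_nonneg hG0.le, abs_of_nonneg (show (0:ℝ) ≤ δ - 2 by linarith)]
        ring
      rw [ha1, ha2]
      have hc2 : |ccc δ x| * |⟪x, u⟫| ≤ (δ * r ^ (δ - 2) * (G * G)) * r :=
        mul_le_mul hCC hip (abs_nonneg _) (by positivity)
      refine add_le_add ?_ ?_
      · refine mul_le_mul_of_nonneg_left ?_ (by positivity)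
        refine mul_le_mul_of_nonneg_left ?_ (by norm_num)
        exact mul_le_mul_of_nonneg_left hc2 hG0.le
      · refine mul_le_mul_of_nonneg_left ?_ (mul_nonneg hG0.le hG0.le)
        refine mul_le_mul_of_nonneg_left ?_ hδ0
        refine mul_le_mul_of_nonneg_left ?_ (by linarith)
        exact mul_le_mul_of_nonneg_left hip ht4
    have hδ2 : (0:ℝ) ≤ δ - 2 := by linarith
    have hbigpos : (0:ℝ) ≤ δ * r ^ (δ - 2) * (2 * (G * ((δ * r ^ (δ - 2) * (G * G)) * r)))
        + G * G * (δ * ((δ - 2) * (r ^ (δ - 2 - 2) * r))) := by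
      refine add_nonneg ?_ ?_
      · exact mul_nonneg (mul_nonneg hδ0 ht2) (mul_nonneg (by norm_num)
          (mul_nonneg hG0.le (mul_nonneg (mul_nonneg (mul_nonneg hδ0 ht2)
            (mul_nonneg hG0.le hG0.le)) hr.le)))
      · exact mul_nonneg (mul_nonneg hG0.le hG0.le) (mul_nonneg hδ0
          (mul_nonneg hδ2 (mul_nonneg ht4 hr.le)))
    exact mul_le_mul hκ (mul_le_mul_of_nonneg_right hip (norm_nonneg x))
      (by positivity) hbigpos
  -- assemble
  have htot : ‖fderiv ℝ (FFF δ) x u u‖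
      ≤ δ * r ^ (δ - 2) * (G * G) * r
        + (δ * r ^ (δ - 2) * (G * G) * (r + r)
          + (δ * r ^ (δ - 2) * (2 * (G * ((δ * r ^ (δ - 2) * (G * G)) * r)))
              + G * G * (δ * ((δ - 2) * (r ^ (δ - 2 - 2) * r)))) * (r * r)) := by
    rw [hFd.fderiv]
    simp only [ContinuousLinearMap.add_apply]
    exact (norm_add_le _ _).trans (add_le_add b1
      ((norm_add_le _ _).trans (add_le_add b2 b3)))
  refine htot.trans ?_
  -- rpow bookkeeping
  have R1 : r ^ (δ - 2) * r = r ^ (δ - 1) := by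
    rw [show δ - 1 = (δ - 2) + 1 by ring, Real.rpow_add hr, Real.rpow_one]
  have R2 : r ^ (δ - 2 - 2) * (r * (r * r)) = r ^ (δ - 1) := by
    have h3 : r * (r * r) = r ^ ((3:ℕ):ℝ) := by rw [Real.rpow_natCast]; ring
    rw [h3, ← Real.rpow_add hr, show δ - 2 - 2 + ((3:ℕ):ℝ) = δ - 1 by push_cast; ring]
  have R3 : r ^ (δ - 2) * r ^ (δ - 2) * (r * (r * r)) = r ^ (δ - 1) * r ^ δ := by
    have h3 : r * (r * r) = r ^ ((3:ℕ):ℝ) := by rw [Real.rpow_natCast]; ring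
    rw [h3, ← Real.rpow_add hr, ← Real.rpow_add hr, ← Real.rpow_add hr]
    congr 1
    push_cast
    ring
  have hsum : δ * r ^ (δ - 2) * (G * G) * r
        + (δ * r ^ (δ - 2) * (G * G) * (r + r)
          + (δ * r ^ (δ - 2) * (2 * (G * ((δ * r ^ (δ - 2) * (G * G)) * r)))
              + G * G * (δ * ((δ - 2) * (r ^ (δ - 2 - 2) * r)))) * (r * r))
      = 3 * δ * (r ^ (δ - 1) * (G * G))
        + 2 * δ ^ 2 * ((r ^ (δ - 1) * (G * G)) * (r ^ δ * G))
        + δ * (δ - 2) * (r ^ (δ - 1) * (G * G)) := by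
    linear_combination (3 * δ * (G * G)) * R1 + (δ * (δ - 2) * (G * G)) * R2
      + (2 * δ ^ 2 * (G * G * G)) * R3
  rw [hsum]
  have hT0 : 0 ≤ r ^ (δ - 1) * (G * G) :=
    mul_nonneg (Real.rpow_nonneg hr.le _) (mul_nonneg hG0.le hG0.le)
  have h2δ : 2 * δ ^ 2 * ((r ^ (δ - 1) * (G * G)) * (r ^ δ * G))
      ≤ 2 * δ ^ 2 * (r ^ (δ - 1) * (G * G)) := by
    refine mul_le_mul_of_nonneg_left ?_ (by positivity)
    calc (r ^ (δ - 1) * (G * G)) * (r ^ δ * G) ≤ (r ^ (δ - 1) * (G * G)) * 1 :=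
          mul_le_mul_of_nonneg_left hGr hT0
      _ = r ^ (δ - 1) * (G * G) := mul_one _
  nlinarith [h2δ, hT0, mul_nonneg hδ0 hT0]

end helpers

/-- For `ψ(x) = x (1 + |x|^δ)⁻¹` with `δ ≥ 2`, the second derivative
satisfies `|ψ''(x)(u,u)| ≤ min(3δ² + δ, (3δ² + δ)|x|^{δ-1})` for all unit vectors `u`. -/
theorem stmt2 (d : ℕ) (δ : ℝ) (hδ : 2 ≤ δ)
    (ψ : EuclideanSpace ℝ (Fin d) → EuclideanSpace ℝ (Fin d))
    (hψ : ∀ x, ψ x = (1 + ‖x‖ ^ δ)⁻¹ • x) :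
    ∀ x u : EuclideanSpace ℝ (Fin d), ‖u‖ = 1 →
      ‖iteratedFDeriv ℝ 2 ψ x ![u, u]‖
        ≤ min (3 * δ ^ 2 + δ) ((3 * δ ^ 2 + δ) * ‖x‖ ^ (δ - 1)) := by
  intro x u hu
  have hψfun : ψ = fun y => ggg δ y • y := funext fun y => hψ y
  have hfd : fderiv ℝ ψ = FFF δ := by
    rw [hψfun]
    exact funext fun z => (hasFDerivAt_psi hδ z).fderiv
  have hcoef : (0:ℝ) ≤ 3 * δ ^ 2 + δ := by nlinarith
  rw [iteratedFDeriv_two_apply, hfd]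
  simp only [Matrix.cons_val_zero, Matrix.cons_val_one, Matrix.head_cons]
  by_cases hx : x = 0
  · subst hx
    rw [(hasFDerivAt_FFF_zero hδ).fderiv]
    simp only [ContinuousLinearMap.zero_apply, norm_zero]
    refine le_min hcoef ?_
    rw [Real.zero_rpow (show δ - 1 ≠ 0 by intro h; linarith [h]), mul_zero]
  · have hb := key_bound hδ hx hu
    have hG0 := ggg_pos δ x
    have hG1 := ggg_le_one δ x
    have hGr := ggg_mul_le_one δ x
    have hrpos : (0:ℝ) < ‖x‖ := norm_pos_iff.mpr hx
    have hrnn : (0:ℝ) ≤ ‖x‖ ^ (δ - 1) := Real.rpow_nonneg (norm_nonneg x) _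
    refine le_min (hb.trans ?_) (hb.trans ?_)
    · have hle1 : ‖x‖ ^ (δ - 1) * (ggg δ x * ggg δ x) ≤ 1 := by
        rcases le_or_gt ‖x‖ 1 with h1 | h1
        · have h2 : ‖x‖ ^ (δ - 1) ≤ 1 :=
            Real.rpow_le_one (norm_nonneg x) h1 (by linarith)
          nlinarith
        · have h2 : ‖x‖ ^ (δ - 1) ≤ ‖x‖ ^ δ :=
            Real.rpow_le_rpow_of_exponent_le h1.le (by linarith)
          nlinarith [mul_le_mul_of_nonneg_right hGr hG0.le,
            mul_le_mul_of_nonneg_right (mul_le_mul_of_nonneg_right h2 hG0.le) hG0.le,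
            Real.rpow_nonneg (norm_nonneg x) δ]
      calc (3 * δ ^ 2 + δ) * (‖x‖ ^ (δ - 1) * (ggg δ x * ggg δ x))
          ≤ (3 * δ ^ 2 + δ) * 1 := mul_le_mul_of_nonneg_left hle1 hcoef
        _ = 3 * δ ^ 2 + δ := mul_one _
    · have hGG1 : ggg δ x * ggg δ x ≤ 1 := by nlinarith
      have hgg : ‖x‖ ^ (δ - 1) * (ggg δ x * ggg δ x) ≤ ‖x‖ ^ (δ - 1) := by
        calc ‖x‖ ^ (δ - 1) * (ggg δ x * ggg δ x) ≤ ‖x‖ ^ (δ - 1) * 1 :=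
              mul_le_mul_of_nonneg_left hGG1 hrnn
          _ = ‖x‖ ^ (δ - 1) := mul_one _
      exact mul_le_mul_of_nonneg_left hgg hcoef
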